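/- Let m ≥ 2 and let x : Fin m → ℝ be nonzero with x_2 ≥ x_3 ≥ ⋯ ≥ x_m ≥ 0, and suppose x_1 ≤ 0, x_1 + x_j ≤ 0 and x_1 − x_j ≤ 0 for all 2 ≤ j ≤ m. Then x_1 < 0, and setting c = #{j : 2 ≤ j ≤ m, x_j = −x_1}, the quantity R⁻ := #{j ≥ 2 : x_1 − x_j < 0} + #{j ≥ 2 : x_1 + x_j < 0} + (1 if x_1 < 0 else 0) equals 2m − 1 − c; in particular m ≤ R⁻ ≤ 2m − 1. -/
import Mathlib


/-- Type BDI, G = SO₀(2, 2m−1), case R⁺ = 0: under the stated hypotheses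
x₁ < 0 and, with c = #{j ≥ 2 : x_j = −x₁}, the count
R⁻ = #{j ≥ 2 : x₁ − x_j < 0} + #{j ≥ 2 : x₁ + x_j < 0} + (1 if x₁ < 0)
equals 2m − 1 − c; in particular m ≤ R⁻ ≤ 2m − 1. -/
theorem stmt8 (m : ℕ) (hm : 2 ≤ m) (x : ℕ → ℝ)
    (hx : ∃ j ∈ Finset.Icc 1 m, x j ≠ 0)
    (hanti : ∀ i j, 2 ≤ i → i ≤ j → j ≤ m → x j ≤ x i)
    (hlast : 0 ≤ x m)
    (h1 : x 1 ≤ 0)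
    (hplus : ∀ j, 2 ≤ j → j ≤ m → x 1 + x j ≤ 0)
    (hminus : ∀ j, 2 ≤ j → j ≤ m → x 1 - x j ≤ 0) :
    x 1 < 0 ∧
    (let c := ((Finset.Icc 2 m).filter (fun j => x j = -x 1)).card
     let R := ((Finset.Icc 2 m).filter (fun j => x 1 - x j < 0)).card +
              ((Finset.Icc 2 m).filter (fun j => x 1 + x j < 0)).card +
              (if x 1 < 0 then 1 else 0)
     R = 2*m - 1 - c ∧ m ≤ R ∧ R ≤ 2*m - 1) := by
  -- x j ≥ 0 for 2 ≤ j ≤ m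
  have hnn : ∀ j, 2 ≤ j → j ≤ m → 0 ≤ x j := fun j h2 hj =>
    le_trans hlast (hanti j m h2 hj le_rfl)
  have hx1 : x 1 < 0 := by
    rcases lt_or_eq_of_le h1 with h | h
    · exact h
    · exfalso
      obtain ⟨j, hj, hne⟩ := hx
      simp only [Finset.mem_Icc] at hj
      apply hne
      rcases Nat.lt_or_ge j 2 with hj2 | hj2
      · have : j = 1 := by omega
        rw [this, ← h]
      · have := hplus j hj2 hj.2
        have := hminus j hj2 hj.2
        linarith [hnn j hj2 hj.2]
  refine ⟨hx1, ?_, ?_, ?_⟩ <;>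
  · have hcard : (Finset.Icc 2 m).card = m - 1 := by
      rw [Nat.card_Icc]; omega
    have hf1 : ((Finset.Icc 2 m).filter (fun j => x 1 - x j < 0)) = Finset.Icc 2 m := by
      apply Finset.filter_true_of_mem
      intro j hj
      simp only [Finset.mem_Icc] at hj
      have := hnn j hj.1 hj.2
      linarith
    have hsplit : ((Finset.Icc 2 m).filter (fun j => x 1 + x j < 0)).card
        + ((Finset.Icc 2 m).filter (fun j => x j = -x 1)).card = (Finset.Icc 2 m).card := by
      have key := Finset.card_filter_add_card_filter_not
        (s := Finset.Icc 2 m) (p := fun j => x 1 + x j < 0)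
      have heq : (Finset.Icc 2 m).filter (fun j => ¬(fun j => x 1 + x j < 0) j)
          = (Finset.Icc 2 m).filter (fun j => x j = -x 1) := by
        apply Finset.filter_congr
        intro j hj
        simp only [Finset.mem_Icc] at hj
        have := hplus j hj.1 hj.2
        simp only [not_lt, eq_iff_iff]
        constructor
        · intro h; linarith
        · intro h; linarith
      rw [heq] at key
      exact key
    have hcle : ((Finset.Icc 2 m).filter (fun j => x j = -x 1)).card ≤ m - 1 := by
      rw [← hcard]; exact Finset.card_filter_le _ _
    rw [hf1, hcard, if_pos hx1]
    omega
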